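/- Let H be a real inner product space, f : H → ℝ convex and differentiable, B ⊆ H a nonempty compact set, δ ∈ (0, 1], R > 0, and x, x* ∈ H such that (x* − x)/R ∈ conv(B). Suppose s ∈ H satisfies ⟨∇f(x), s⟩ ≤ δ·inf_{s' ∈ B} ⟨∇f(x), s'⟩. Then ⟨−∇f(x), s⟩ ≥ (δ/R)·(f(x) − f(x*)). -/

import Mathlib

open scoped RealInnerProductSpace

/-- Gradient inequality for convex functions: `⟪g, y - x⟫ ≤ f y - f x`. -/
lemma grad_ineq {H : Type*} [NormedAddCommGroup H] [InnerProductSpace ℝ H]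
    (f : H → ℝ) (hconv : ConvexOn ℝ Set.univ f)
    (x y : H) (gradf : H) (hgrad : HasFDerivAt f ((innerSL ℝ) gradf) x) :
    ⟪gradf, y - x⟫ ≤ f y - f x := by
  set φ : ℝ → ℝ := fun t => f (x + t • (y - x)) with hφ
  have hφconv : ConvexOn ℝ Set.univ φ := by
    have := hconv.comp_affineMap (AffineMap.lineMap x y : ℝ →ᵃ[ℝ] H)
    have heq : ∀ t : ℝ, φ t = (f ∘ (AffineMap.lineMap x y : ℝ →ᵃ[ℝ] H)) t := by
      intro t; simp [φ, AffineMap.lineMap_apply, add_comm]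
    refine ConvexOn.congr ?_ (fun t _ => (heq t).symm)
    simpa [Set.preimage_univ] using this
  have hd : HasDerivAt φ ⟪gradf, y - x⟫ 0 := by
    have h1 : HasDerivAt (fun t : ℝ => x + t • (y - x)) (y - x) 0 := by
      simpa using ((hasDerivAt_id (0:ℝ)).smul_const (y - x)).const_add x
    have hgrad' : HasFDerivAt f ((innerSL ℝ) gradf) (x + (0:ℝ) • (y - x)) := by
      simpa using hgrad
    have := hgrad'.comp_hasDerivAt (0:ℝ) h1
    exact this
  have := hφconv.le_slope_of_hasDerivAt (Set.mem_univ 0) (Set.mem_univ 1)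
    one_pos hd
  simpa [slope, φ] using this

/-- The approximate MP oracle output satisfies
`⟨−∇f(x), s⟩ ≥ (δ/R)·(f(x) − f(x*))` whenever `(x* − x)/R ∈ conv(B)`. -/
theorem stmt_15 {H : Type*} [NormedAddCommGroup H] [InnerProductSpace ℝ H]
    (f : H → ℝ) (hconv : ConvexOn ℝ Set.univ f) (hdiff : Differentiable ℝ f)
    (B : Set H) (hB : B.Nonempty) (hBc : IsCompact B)
    (δ R : ℝ) (hδ : δ ∈ Set.Ioc (0 : ℝ) 1) (hR : 0 < R)
    (x xstar : H) (hmem : R⁻¹ • (xstar - x) ∈ convexHull ℝ B)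
    (gradf : H) (hgrad : HasFDerivAt f ((innerSL ℝ) gradf) x)
    (s : H) (hs : ⟪gradf, s⟫ ≤ δ * sInf ((fun s' => ⟪gradf, s'⟫) '' B)) :
    ⟪-gradf, s⟫ ≥ δ / R * (f x - f xstar) := by
  have hδ0 : 0 < δ := hδ.1
  set m := sInf ((fun s' => ⟪gradf, s'⟫) '' B) with hm
  -- m is a lower bound for the inner product on convexHull B
  have hbdd : BddBelow ((fun s' => ⟪gradf, s'⟫) '' B) :=
    (hBc.image (continuous_const.inner continuous_id)).bddBelow
  have hset : convexHull ℝ B ⊆ {z | m ≤ ⟪gradf, z⟫} := by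
    apply convexHull_min
    · intro z hz
      exact csInf_le hbdd ⟨z, hz, rfl⟩
    · exact convex_halfSpace_ge ⟨fun a b => inner_add_right _ _ _,
        fun c a => real_inner_smul_right _ _ _⟩ m
  have h1 : m ≤ R⁻¹ * ⟪gradf, xstar - x⟫ := by
    have := hset hmem
    simpa [real_inner_smul_right] using this
  have h2 : ⟪gradf, xstar - x⟫ ≤ f xstar - f x := grad_ineq f hconv x xstar gradf hgrad
  have h3 : ⟪gradf, s⟫ ≤ δ * (R⁻¹ * (f xstar - f x)) := by
    calc ⟪gradf, s⟫ ≤ δ * m := hs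
      _ ≤ δ * (R⁻¹ * ⟪gradf, xstar - x⟫) := by nlinarith
      _ ≤ δ * (R⁻¹ * (f xstar - f x)) := by
          have hRi : (0:ℝ) ≤ R⁻¹ := le_of_lt (inv_pos.mpr hR)
          gcongr
  have : ⟪-gradf, s⟫ = -⟪gradf, s⟫ := by simp
  rw [this]
  have : δ / R * (f x - f xstar) = -(δ * (R⁻¹ * (f xstar - f x))) := by
    field_simp; ring
  rw [this]
  linarith
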